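/- Let f : ℝ^{n×n} → ℝ be twice continuously differentiable and define g(W_1, W_2) := f(W_2 W_1) for W_1 ∈ ℝ^{k×n}, W_2 ∈ ℝ^{n×k} with k > n. Suppose (W_1, W_2) is a critical point of g (i.e. W_2ᵀ ∇f(W_2 W_1) = 0 and ∇f(W_2 W_1) W_1ᵀ = 0) but W_2 W_1 is not a critical point of f (i.e. ∇f(W_2 W_1) ≠ 0). Then (W_1, W_2) is a strict saddle of g: there exists a direction (M_1, M_2) ∈ ℝ^{k×n} × ℝ^{n×k} such that the second derivative at 0 of the function t ↦ g(W_1 + t M_1, W_2 + t M_2) is strictly negative. -/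

import Mathlib

open Matrix

noncomputable section

attribute [local instance] Matrix.normedAddCommGroup Matrix.normedSpace

/-- Frobenius inner product. -/
def frobInner {a b : ℕ} (A B : Matrix (Fin a) (Fin b) ℝ) : ℝ := ∑ i, ∑ j, A i j * B i j

/-- Let `f` be twice continuously differentiable with gradient `gradf` and
`g(W₁, W₂) = f(W₂ W₁)`.  If `(W₁, W₂)` is a critical point of `g` but `W₂ W₁` is not a
critical point of `f`, then `(W₁, W₂)` is a strict saddle of `g`: there is a direction
`(M₁, M₂)` in which the second derivative of `t ↦ g(W₁ + t M₁, W₂ + t M₂)` at `0` is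
strictly negative. -/
theorem stmt10 {n k : ℕ} (hn : 1 ≤ n) (hk : n < k)
    (f : Matrix (Fin n) (Fin n) ℝ → ℝ) (hf : ContDiff ℝ 2 f)
    (gradf : Matrix (Fin n) (Fin n) ℝ → Matrix (Fin n) (Fin n) ℝ)
    (hgradf : ∀ X H : Matrix (Fin n) (Fin n) ℝ,
      HasDerivAt (fun s : ℝ => f (X + s • H)) (frobInner (gradf X) H) 0)
    (W1 : Matrix (Fin k) (Fin n) ℝ) (W2 : Matrix (Fin n) (Fin k) ℝ)
    (hcrit1 : W2ᵀ * gradf (W2 * W1) = 0)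
    (hcrit2 : gradf (W2 * W1) * W1ᵀ = 0)
    (hnoncrit : gradf (W2 * W1) ≠ 0) :
    ∃ (M1 : Matrix (Fin k) (Fin n) ℝ) (M2 : Matrix (Fin n) (Fin k) ℝ),
      deriv (deriv (fun t : ℝ => f ((W2 + t • M2) * (W1 + t • M1)))) 0 < 0 := by
  classical
  set X := W2 * W1 with hX
  set G := gradf X with hG
  -- nonzero entry of G
  obtain ⟨i, j, hij⟩ : ∃ i j, G i j ≠ 0 := by
    by_contra h
    push_neg at h
    exact hnoncrit (by ext i j; simpa using h i j)
  -- kernel vector of W2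
  obtain ⟨v, hvker, hv0⟩ : ∃ v : Fin k → ℝ, W2 *ᵥ v = 0 ∧ v ≠ 0 := by
    have hnotinj : ¬ Function.Injective W2.mulVecLin := by
      intro hinj
      have := LinearMap.finrank_le_finrank_of_injective hinj
      simp [Module.finrank_pi] at this
      omega
    rw [← LinearMap.ker_eq_bot] at hnotinj
    obtain ⟨v, hv, hv0⟩ := Submodule.exists_mem_ne_zero_of_ne_bot hnotinj
    exact ⟨v, hv, hv0⟩
  set d : ℝ := ∑ p, v p * v p with hd
  have hdpos : 0 < d := by
    obtain ⟨p, hp⟩ : ∃ p, v p ≠ 0 := by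
      by_contra h; push_neg at h; exact hv0 (funext h)
    exact Finset.sum_pos' (fun q _ => mul_self_nonneg _)
      ⟨p, Finset.mem_univ p, mul_self_pos.2 hp⟩
  set F := fderiv ℝ f with hF
  set M2 : Matrix (Fin n) (Fin k) ℝ := Matrix.of (fun p q => if p = i then v q else 0) with hM2
  set A : Matrix (Fin n) (Fin n) ℝ := M2 * W1 with hA
  set C : ℝ := (fderiv ℝ F X) A A with hC
  set s : ℝ := -(C + 1) / (2 * (d * G i j)) with hs
  set M1 : Matrix (Fin k) (Fin n) ℝ := Matrix.of (fun p q => if q = j then s * v p else 0) with hM1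
  set B : Matrix (Fin n) (Fin n) ℝ := M2 * M1 with hB
  refine ⟨M1, M2, ?_⟩
  -- W2 * M1 = 0
  have hW2M1 : W2 * M1 = 0 := by
    ext a b
    simp only [mul_apply, hM1, Matrix.of_apply, Matrix.zero_apply]
    by_cases hb : b = j
    · simp only [hb, if_true]
      have := congrFun hvker a
      simp only [mulVec, dotProduct, Pi.zero_apply] at this
      calc ∑ p, W2 a p * (s * v p) = s * ∑ p, W2 a p * v p := by
            rw [Finset.mul_sum]; congr 1; ext p; ring
        _ = 0 := by rw [this, mul_zero]
    · simp [hb]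
  -- frobInner G B
  have hfrob : frobInner G B = s * d * G i j := by
    have hBab : ∀ a b, B a b = if a = i ∧ b = j then s * d else 0 := by
      intro a b
      simp only [hB, mul_apply, hM2, hM1, Matrix.of_apply]
      by_cases ha : a = i
      · by_cases hb : b = j
        · simp only [ha, hb, if_true, true_and]
          rw [hd, Finset.mul_sum]
          congr 1; ext p; ring
        · simp [ha, hb]
      · simp [ha]
    simp only [frobInner, hBab]
    rw [Finset.sum_eq_single i]
    · rw [Finset.sum_eq_single j]
      · simp [mul_comm]
      · intro b _ hb; simp [hb]
      · simp
    · intro a _ ha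
      apply Finset.sum_eq_zero
      intro b _
      simp [ha]
    · simp
  -- the curve
  set c : ℝ → Matrix (Fin n) (Fin n) ℝ := fun t => X + t • A + (t * t) • B with hc
  have hfact : ∀ t : ℝ, (W2 + t • M2) * (W1 + t • M1) = c t := by
    intro t
    show (W2 + t • M2) * (W1 + t • M1) = X + t • A + (t * t) • B
    clear_value c B M1 s C A M2 G X
    rw [hX, hA, hB]
    simp only [Matrix.add_mul, Matrix.mul_add, Matrix.smul_mul, Matrix.mul_smul, smul_smul, hW2M1,
      smul_zero, add_zero, zero_add]
  have hfeq : (fun t : ℝ => f ((W2 + t • M2) * (W1 + t • M1))) = fun t => f (c t) := by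
    funext t; rw [hfact t]
  -- derivatives
  have hfdiff : Differentiable ℝ f := hf.differentiable (by norm_num)
  have hF1 : ∀ Y, HasFDerivAt f (F Y) Y := fun Y => (hfdiff Y).hasFDerivAt
  have hkey : ∀ Y H, F Y H = frobInner (gradf Y) H := by
    intro Y H
    have hline : HasDerivAt (fun u : ℝ => Y + u • H) H 0 := by
      have := ((hasDerivAt_id (0 : ℝ)).smul_const H).const_add Y
      simp only [id, one_smul] at this
      exact this
    have h2 : HasDerivAt (fun u : ℝ => f (Y + u • H)) (F (Y + (0 : ℝ) • H) H) 0 := by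
      have := (hF1 (Y + (0 : ℝ) • H)).comp_hasDerivAt 0 hline
      exact this
    have h2' : HasDerivAt (fun u : ℝ => f (Y + u • H)) (F Y H) 0 := by
      simpa using h2
    exact h2'.unique (hgradf Y H)
  have hcderiv : ∀ t : ℝ, HasDerivAt c (A + (2 * t) • B) t := by
    intro t
    have h1 : HasDerivAt (fun u : ℝ => u • A) ((1 : ℝ) • A) t := (hasDerivAt_id t).smul_const A
    have h2 : HasDerivAt (fun u : ℝ => (u * u) • B) ((1 * t + t * 1) • B) t :=
      ((hasDerivAt_id t).mul (hasDerivAt_id t)).smul_const B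
    have h3 := (h1.const_add X).add h2
    have he : (1 : ℝ) • A + (1 * t + t * 1) • B = A + (2 * t) • B := by
      rw [one_smul]
      congr 1
      rw [show (1 * t + t * 1 : ℝ) = 2 * t by ring]
    rw [← he]
    exact h3
  have hderiv1 : deriv (fun t : ℝ => f (c t)) = fun t => F (c t) (A + (2 * t) • B) := by
    funext t
    exact ((hF1 (c t)).comp_hasDerivAt t (hcderiv t)).deriv
  -- second derivative
  have hc0 : c 0 = X := by simp [hc]
  have hcA : HasDerivAt c A 0 := by simpa using hcderiv 0
  have hFC1 := hf.fderiv_right (m := 1) (by norm_num)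
  have hdF : HasFDerivAt F (fderiv ℝ F X) X :=
    ((hFC1.differentiable one_ne_zero) X).hasFDerivAt
  have hdF' : HasFDerivAt F (fderiv ℝ F X) (c 0) := by rw [hc0]; exact hdF
  have hFc : HasDerivAt (fun t : ℝ => F (c t)) ((fderiv ℝ F X) A) 0 :=
    @HasFDerivAt.comp_hasDerivAt ℝ _ _ _ _ _ ContinuousLinearMap.toNormedAddCommGroup
      ContinuousLinearMap.toNormedSpace _ _ 0 F _ hdF' hcA
  have hlin : HasDerivAt (fun t : ℝ => A + (2 * t) • B) ((2 : ℝ) • B) 0 := by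
    have := (((hasDerivAt_const (0 : ℝ) (2 : ℝ)).mul (hasDerivAt_id 0)).smul_const B).const_add A
    simp only [id, zero_mul, mul_one, zero_add] at this
    exact this
  have hsec : HasDerivAt (fun t : ℝ => F (c t) (A + (2 * t) • B))
      ((fderiv ℝ F X) A (A + (2 * 0 : ℝ) • B) + F (c 0) ((2 : ℝ) • B)) 0 :=
    hFc.clm_apply hlin
  have hval : deriv (deriv (fun t : ℝ => f ((W2 + t • M2) * (W1 + t • M1)))) 0
      = C + 2 * (s * d * G i j) := by
    rw [hfeq, hderiv1, hsec.deriv, hc0]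
    have : F X ((2 : ℝ) • B) = 2 * frobInner G B := by
      rw [_root_.map_smul, hkey X B, ← hG, smul_eq_mul]
    rw [this, hfrob]
    simp [hC]
  rw [hval]
  have hne : d * G i j ≠ 0 := mul_ne_zero (ne_of_gt hdpos) hij
  have : 2 * (s * d * G i j) = -(C + 1) := by
    rw [hs]
    field_simp
  rw [this]
  linarith
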